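/- Define b_n by a_n = (-1)^n 3^{⌈n/3⌉} b_n where a_1=-3, a_2=3, a_3=-9, a_n = -3(a_{n-1}+a_{n-2}+a_{n-3}) for n ≥ 4. Then for every t ≥ 1, b_{t+27} ≡ b_t (mod 9). -/

import Mathlib

/-- `a n = D(Cₙ, -3)`: `a 1 = -3`, `a 2 = 3`, `a 3 = -9`,
and `a n = -3(a (n-1) + a (n-2) + a (n-3))` for `n ≥ 4`. -/
def aSeq : ℕ → ℤ
  | 0 => 0
  | 1 => -3
  | 2 => 3
  | 3 => -9
  | (n + 4) => -3 * (aSeq (n + 3) + aSeq (n + 2) + aSeq (n + 1))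

lemma ceil_eq (t : ℕ) : ⌈(t:ℚ)/3⌉₊ = (t+2)/3 := by
  rcases Nat.eq_zero_or_pos t with h | h
  · subst h; norm_num
  · rw [Nat.ceil_eq_iff (by omega)]
    rw [lt_div_iff₀ (by norm_num), div_le_iff₀ (by norm_num)]
    constructor
    · have h1 : ((t+2)/3 - 1) * 3 < t := by omega
      calc ((((t+2)/3 - 1 : ℕ)):ℚ) * 3 = (((t+2)/3 - 1) * 3 : ℕ) := by push_cast; ring
        _ < t := by exact_mod_cast h1
    · have h2 : t ≤ ((t+2)/3) * 3 := by omega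
      calc (t:ℚ) ≤ ((((t+2)/3) * 3 : ℕ) : ℚ) := by exact_mod_cast h2
        _ = ((t+2)/3 : ℕ) * 3 := by push_cast; ring

def Pp (t : ℕ) : Prop := (3:ℤ)^((t+2)/3 + 11) ∣ aSeq (t+27) + 3^9 * aSeq t

lemma key : ∀ n : ℕ, Pp (n+1) ∧ Pp (n+2) ∧ Pp (n+3) := by
  intro n
  induction n with
  | zero => refine ⟨?_, ?_, ?_⟩ <;> · unfold Pp; decide
  | succ n ih =>
    obtain ⟨h1, h2, h3⟩ := ih
    refine ⟨h2, h3, ?_⟩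
    have hgoal : n + 1 + 3 = n + 4 := by omega
    rw [hgoal]
    unfold Pp at *
    have e1 : aSeq (n + 4 + 27) = -3 * (aSeq (n + 3 + 27) + aSeq (n + 2 + 27) + aSeq (n + 1 + 27)) := by
      rw [show n + 4 + 27 = (n + 27) + 4 by omega]
      rw [aSeq]
    have e2 : aSeq (n + 4) = -3 * (aSeq (n + 3) + aSeq (n + 2) + aSeq (n + 1)) := by
      rw [show n + 4 = n + 4 by rfl]
      rw [aSeq]
    have key_eq : aSeq (n + 4 + 27) + 3^9 * aSeq (n + 4) =
        ((aSeq (n + 3 + 27) + 3^9 * aSeq (n + 3)) +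
              (aSeq (n + 2 + 27) + 3^9 * aSeq (n + 2)) +
              (aSeq (n + 1 + 27) + 3^9 * aSeq (n + 1))) * (-3) := by
      rw [e1, e2]; ring
    rw [key_eq]
    have hk : (n + 4 + 2)/3 + 11 = ((n + 1 + 2)/3 + 11) + 1 := by omega
    rw [hk, pow_succ]
    have d1 : (3:ℤ)^((n+1+2)/3 + 11) ∣ aSeq (n + 3 + 27) + 3^9 * aSeq (n + 3) :=
      dvd_trans (pow_dvd_pow 3 (by omega)) h3
    have d2 : (3:ℤ)^((n+1+2)/3 + 11) ∣ aSeq (n + 2 + 27) + 3^9 * aSeq (n + 2) :=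
      dvd_trans (pow_dvd_pow 3 (by omega)) h2
    exact mul_dvd_mul ((d1.add d2).add h1) (by norm_num)

theorem b_periodic_mod_nine (b : ℕ → ℤ)
    (hb : ∀ n, 1 ≤ n → aSeq n = (-1) ^ n * 3 ^ (⌈(n : ℚ) / 3⌉₊) * b n)
    (t : ℕ) (ht : 1 ≤ t) :
    b (t + 27) ≡ b t [ZMOD 9] := by
  have hP : Pp t := by
    have := (key (t - 1)).1
    rwa [show t - 1 + 1 = t by omega] at this
  unfold Pp at hP
  have h1 := hb t ht
  have h2 := hb (t + 27) (by omega)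
  rw [ceil_eq] at h1
  rw [show ((t + 27 : ℕ) : ℚ) = ((t:ℕ) : ℚ) + 27 by push_cast; ring] at h2
  rw [show ((t:ℚ) + 27)/3 = (t:ℚ)/3 + (9:ℕ) by push_cast; ring] at h2
  rw [Nat.ceil_add_natCast (by positivity)] at h2
  rw [ceil_eq] at h2
  have hpow : (-1:ℤ) ^ (t + 27) = -(-1)^t := by
    rw [pow_add]; norm_num
  set k := (t + 2)/3 with hkdef
  rw [h1, h2, hpow] at hP
  have hre : -(-1:ℤ)^t * 3 ^ (k + 9) * b (t + 27) + 3 ^ 9 * ((-1) ^ t * 3 ^ k * b t)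
      = 3 ^ (k + 9) * ((-1)^t * (b t - b (t + 27))) := by ring
  rw [hre, show k + 11 = (k + 9) + 2 by omega, pow_add] at hP
  have h9 : (9:ℤ) ∣ (-1)^t * (b t - b (t + 27)) := by
    have := (mul_dvd_mul_iff_left (a := (3:ℤ)^(k+9)) (by positivity)).mp hP
    norm_num at this
    exact this
  have hd : (9:ℤ) ∣ b t - b (t + 27) := by
    have := h9.mul_left ((-1:ℤ)^t)
    simpa [← mul_assoc, ← mul_pow] using this
  exact Int.modEq_iff_dvd.mpr hd
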